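/- Let W_Δ(x,y) be the set of multisets of size Δ over {M,P,O,X} matching (M O^{d−1} | P^d) O^y X^x with d = Δ−x−y, and let B_Δ(x,y) be as above. If Δ = x + y + 2, then for every w ∈ W_Δ(x,y): either w contains a copy of M, in which case the multiset consisting of Δ copies of M is not in B_Δ(x,y); or w contains a copy of P, in which case the multiset consisting of Δ copies of P is not in B_Δ(x,y). -/
import Mathlib


inductive Lbl : Type
  | M | P | O | X
deriving DecidableEq

open Lbl

/-- The set of multisets of `k` symbols, each drawn from `S`. -/
def FromSet (S : Set Lbl) (k : ℕ) : Set (Multiset Lbl) :=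
  {m | Multiset.card m = k ∧ ∀ s ∈ m, s ∈ S}

/-- Concatenation of two pattern sets of multisets. -/
def concatP (A B : Set (Multiset Lbl)) : Set (Multiset Lbl) :=
  {m | ∃ a ∈ A, ∃ b ∈ B, m = a + b}

/-- `B_Δ(x,y)`: multisets matching `([MX][POX]^{d-1} | [OX]^d)[POX]^y[MPOX]^x`, `d = Δ-x-y`. -/
def Bset (Δ x y : ℕ) : Set (Multiset Lbl) :=
  concatP (concatP ((concatP (FromSet {M, X} 1) (FromSet {P, O, X} (Δ - x - y - 1))) ∪
      FromSet {O, X} (Δ - x - y)) (FromSet {P, O, X} y)) (FromSet Set.univ x)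

/-- `W_Δ(x,y)`: multisets matching `(M O^{d-1} | P^d) O^y X^x`, `d = Δ-x-y`. -/
def Wset (Δ x y : ℕ) : Set (Multiset Lbl) :=
  concatP (concatP ((concatP (FromSet {M} 1) (FromSet {O} (Δ - x - y - 1))) ∪
      FromSet {P} (Δ - x - y)) (FromSet {O} y)) (FromSet {X} x)

lemma count_le_of_fromSet {S : Set Lbl} {k : ℕ} {m : Multiset Lbl} (h : m ∈ FromSet S k)
    (s : Lbl) : Multiset.count s m ≤ k :=
  h.1 ▸ Multiset.count_le_card s m

lemma count_eq_zero_of_fromSet {S : Set Lbl} {k : ℕ} {m : Multiset Lbl} (h : m ∈ FromSet S k)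
    {s : Lbl} (hs : s ∉ S) : Multiset.count s m = 0 := by
  rw [Multiset.count_eq_zero]
  intro hm; exact hs (h.2 s hm)

lemma repM_not_B (Δ x y : ℕ) (hΔ : Δ = x + y + 2) :
    Multiset.replicate Δ Lbl.M ∉ Bset Δ x y := by
  rintro ⟨ab, ⟨a, ha, b, hb, rfl⟩, c, hc, heq⟩
  have hcount := congrArg (Multiset.count Lbl.M) heq
  simp [Multiset.count_replicate, Multiset.count_add] at hcount
  have hb0 : Multiset.count Lbl.M b = 0 := count_eq_zero_of_fromSet hb (by simp)
  have hc1 : Multiset.count Lbl.M c ≤ x := count_le_of_fromSet hc _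
  rcases ha with ⟨a1, h1, a2, h2, rfl⟩ | ha
  · have := count_le_of_fromSet h1 Lbl.M
    have h20 : Multiset.count Lbl.M a2 = 0 := count_eq_zero_of_fromSet h2 (by simp)
    simp [Multiset.count_add] at hcount
    omega
  · have ha0 : Multiset.count Lbl.M a = 0 := count_eq_zero_of_fromSet ha (by simp)
    omega

lemma repP_not_B (Δ x y : ℕ) (hΔ : Δ = x + y + 2) :
    Multiset.replicate Δ Lbl.P ∉ Bset Δ x y := by
  rintro ⟨ab, ⟨a, ha, b, hb, rfl⟩, c, hc, heq⟩
  have hcount := congrArg (Multiset.count Lbl.P) heq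
  simp [Multiset.count_replicate, Multiset.count_add] at hcount
  have hby : Multiset.count Lbl.P b ≤ y := count_le_of_fromSet hb _
  have hc1 : Multiset.count Lbl.P c ≤ x := count_le_of_fromSet hc _
  rcases ha with ⟨a1, h1, a2, h2, rfl⟩ | ha
  · have h10 : Multiset.count Lbl.P a1 = 0 := count_eq_zero_of_fromSet h1 (by simp)
    have h2le : Multiset.count Lbl.P a2 ≤ Δ - x - y - 1 := count_le_of_fromSet h2 _
    simp [Multiset.count_add] at hcount
    omega
  · have ha0 : Multiset.count Lbl.P a = 0 := count_eq_zero_of_fromSet ha (by simp)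
    omega

theorem stmt_4 (Δ x y : ℕ) (hΔ : Δ = x + y + 2) :
    ∀ w ∈ Wset Δ x y,
      (Lbl.M ∈ w ∧ Multiset.replicate Δ Lbl.M ∉ Bset Δ x y) ∨
      (Lbl.P ∈ w ∧ Multiset.replicate Δ Lbl.P ∉ Bset Δ x y) := by
  rintro w ⟨ab, ⟨a, ha, b, hb, rfl⟩, c, hc, rfl⟩
  rcases ha with ⟨a1, h1, a2, h2, rfl⟩ | ha
  · left
    constructor
    · have hne : a1 ≠ 0 := by
        intro h0; rw [h0] at h1; simp [FromSet] at h1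
      obtain ⟨s, hs⟩ := Multiset.exists_mem_of_ne_zero hne
      have : s ∈ ({M} : Set Lbl) := h1.2 s hs
      simp at this
      subst this
      simp [Multiset.mem_add]
      tauto
    · exact repM_not_B Δ x y hΔ
  · right
    constructor
    · have hcard : Multiset.card a = Δ - x - y := ha.1
      have hne : a ≠ 0 := by
        intro h0; rw [h0] at hcard; simp at hcard; omega
      obtain ⟨s, hs⟩ := Multiset.exists_mem_of_ne_zero hne
      have : s ∈ ({P} : Set Lbl) := ha.2 s hs
      simp at this
      subst this
      simp [Multiset.mem_add]
      tauto
    · exact repP_not_B Δ x y hΔ
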